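/- arXiv:2502.01470 — 3 statements merged into one kernel-verified Lean document; each statement's English description precedes it below -/
import Mathlib

section
/- Let N ≥ 2 be an integer, r > 0 and κ ∈ ℝ. Define Z_j(t) = r·e^{i κ (N−1) t / r²}·e^{2πi(j−1)/N} for j = 1,…,N and t ∈ ℝ. Then Z_j(t) ≠ Z_k(t) for all j ≠ k and all t, and the functions Z_j satisfy the point-vortex system d/dt Z_j(t) = 2i Σ_{k≠j} κ (Z_j(t) − Z_k(t))/|Z_j(t) − Z_k(t)|² for every j and t. In other words, the regular N-gon with identical circulations κ rotates rigidly with angular speed κ(N−1)/r². -/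
open Filter Finset

noncomputable section

/-- The rotating regular `N`-gon configuration of point vortices:
`Z_j(t) = r e^{iκ(N−1)t/r²} e^{2πi(j−1)/N}` (indices `j : Fin N` represent `j+1`). -/
def polygonVortex (N : ℕ) (r κ : ℝ) (j : Fin N) (t : ℝ) : ℂ :=
  (r : ℂ) * Complex.exp (Complex.I * (κ : ℂ) * (((N : ℝ) - 1 : ℝ) : ℂ) * (t : ℂ) / ((r : ℂ) ^ 2))
    * Complex.exp (2 * (Real.pi : ℂ) * Complex.I * ((j : ℕ) : ℂ) / (N : ℂ))

lemma pair_sum {w : ℂ} (hw0 : w ≠ 0) (hw1 : w ≠ 1) :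
    1 / (1 - w) + 1 / (1 - w⁻¹) = 1 := by
  have h1 : (1 : ℂ) - w ≠ 0 := sub_ne_zero.mpr (Ne.symm hw1)
  have h2 : (1 : ℂ) - w⁻¹ ≠ 0 := by
    rw [sub_ne_zero]
    intro h
    exact hw1 (inv_eq_one.mp h.symm)
  have h3 : w - 1 ≠ 0 := sub_ne_zero.mpr hw1
  rw [show (1 : ℂ) - w⁻¹ = (w - 1) / w by field_simp, one_div_div,
    div_add_div _ _ h1 h3, div_eq_one_iff_eq (mul_ne_zero h1 h3)]
  ring

lemma key_sum {N : ℕ} [NeZero N] (hN : 2 ≤ N) {ζ : ℂ} (hprim : IsPrimitiveRoot ζ N) :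
    ∑ m ∈ (Finset.univ.erase (0 : Fin N)), (1 : ℂ) / (1 - ζ ^ (m : ℕ)) = ((N : ℂ) - 1) / 2 := by
  have hζN : ζ ^ N = 1 := hprim.pow_eq_one
  have hζ0 : ζ ≠ 0 := hprim.ne_zero (by omega)
  have hvalpos : ∀ m : Fin N, m ≠ 0 → 0 < (m : ℕ) := by
    intro m hm
    exact Nat.pos_of_ne_zero (fun h => hm (Fin.ext (by simp [h])))
  have hne1 : ∀ m : Fin N, m ≠ 0 → ζ ^ (m : ℕ) ≠ 1 := fun m hm =>
    hprim.pow_ne_one_of_pos_of_lt (hvalpos m hm).ne' m.isLt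
  have hpowneg : ∀ m : Fin N, m ≠ 0 → ζ ^ ((-m : Fin N) : ℕ) = (ζ ^ (m : ℕ))⁻¹ := by
    intro m hm
    have hv : ((-m : Fin N) : ℕ) = N - (m : ℕ) := by
      have h1 := hvalpos m hm
      have h2 := m.isLt
      rw [Fin.coe_neg, Nat.mod_eq_of_lt (by omega)]
    rw [hv]
    refine eq_inv_of_mul_eq_one_left ?_
    rw [← pow_add, Nat.sub_add_cancel m.isLt.le, hζN]
  have h0 : ∑ m ∈ (Finset.univ.erase (0 : Fin N)), ((1 : ℂ) / (1 - ζ ^ (m : ℕ)) - 1 / 2) = 0 := by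
    refine Finset.sum_involution (fun m _ => -m) ?_ ?_ (fun m hm => ?_) (fun m hm => neg_neg m)
    · intro m hm
      have hm0 : m ≠ 0 := Finset.ne_of_mem_erase hm
      rw [hpowneg m hm0]
      have := pair_sum (pow_ne_zero (m : ℕ) hζ0) (hne1 m hm0)
      linear_combination this
    · intro m hm hf heq
      apply hf
      have hm0 : m ≠ 0 := Finset.ne_of_mem_erase hm
      have heq' : -m = m := heq
      have hw : (ζ ^ (m : ℕ))⁻¹ = ζ ^ (m : ℕ) := by rw [← hpowneg m hm0, heq']
      have hsq : ζ ^ (m : ℕ) * ζ ^ (m : ℕ) = 1 := by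
        nth_rewrite 1 [← hw]
        exact inv_mul_cancel₀ (pow_ne_zero _ hζ0)
      have : ζ ^ (m : ℕ) = -1 := by
        rcases mul_self_eq_one_iff.mp hsq with h | h
        · exact absurd h (hne1 m hm0)
        · exact h
      rw [this]
      norm_num
    · exact Finset.mem_erase.mpr ⟨neg_ne_zero.mpr (Finset.ne_of_mem_erase hm), Finset.mem_univ _⟩
  rw [Finset.sum_sub_distrib, Finset.sum_const, sub_eq_zero] at h0
  rw [h0, Finset.card_erase_of_mem (Finset.mem_univ _), Finset.card_univ, Fintype.card_fin]
  have : ((N - 1 : ℕ) : ℂ) = (N : ℂ) - 1 := by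
    push_cast [Nat.cast_sub (by omega : 1 ≤ N)]; ring
  rw [nsmul_eq_mul, this]
  ring

lemma sum_over_erase {N : ℕ} [NeZero N] (hN : 2 ≤ N) {ζ : ℂ} (hprim : IsPrimitiveRoot ζ N)
    (j : Fin N) :
    ∑ k ∈ Finset.univ.erase j, (1 : ℂ) / (ζ ^ (j : ℕ) - ζ ^ (k : ℕ))
      = ((N : ℂ) - 1) / (2 * ζ ^ (j : ℕ)) := by
  have hζN : ζ ^ N = 1 := hprim.pow_eq_one
  have hζ0 : ζ ≠ 0 := hprim.ne_zero (by omega)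
  have hζj : ζ ^ (j : ℕ) ≠ 0 := pow_ne_zero _ hζ0
  have hmul : ∀ m : Fin N, ζ ^ ((m + j : Fin N) : ℕ) = ζ ^ (m : ℕ) * ζ ^ (j : ℕ) := by
    intro m
    rw [Fin.val_add, ← pow_eq_pow_mod _ hζN, pow_add]
  have step : ∑ k ∈ Finset.univ.erase j, (1 : ℂ) / (ζ ^ (j : ℕ) - ζ ^ (k : ℕ))
      = ∑ m ∈ Finset.univ.erase (0 : Fin N), (1 / ζ ^ (j : ℕ)) * (1 / (1 - ζ ^ (m : ℕ))) := by
    refine Finset.sum_nbij' (fun k => k - j) (fun m => m + j) ?_ ?_ ?_ ?_ ?_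
    · intro k hk
      exact Finset.mem_erase.mpr ⟨sub_ne_zero.mpr (Finset.ne_of_mem_erase hk), Finset.mem_univ _⟩
    · intro m hm
      refine Finset.mem_erase.mpr ⟨fun h => Finset.ne_of_mem_erase hm ?_, Finset.mem_univ _⟩
      simpa using congrArg (· - j) h
    · intro k _; exact sub_add_cancel k j
    · intro m _; exact add_sub_cancel_right m j
    · intro k hk
      have hkj : ζ ^ (k : ℕ) = ζ ^ ((k - j : Fin N) : ℕ) * ζ ^ (j : ℕ) := by
        rw [← hmul, sub_add_cancel]
      rw [hkj]
      rw [show ζ ^ (j : ℕ) - ζ ^ ((k - j : Fin N) : ℕ) * ζ ^ (j : ℕ)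
          = ζ ^ (j : ℕ) * (1 - ζ ^ ((k - j : Fin N) : ℕ)) by ring]
      rw [one_div, mul_inv, one_div, one_div]
  rw [step, ← Finset.mul_sum, key_sum hN hprim]
  rw [one_div]
  field_simp

/-- **The rotating polygon solves the point-vortex system**: the vertices of a regular
`N`-gon of radius `r` with identical circulations `κ`, rotating rigidly at angular speed
`κ(N−1)/r²`, remain distinct for all times and solve
`d/dt Z_j = 2i ∑_{k ≠ j} κ (Z_j − Z_k)/|Z_j − Z_k|²`. -/
theorem polygon_point_vortex_solution
    (N : ℕ) (hN : 2 ≤ N) (r : ℝ) (hr : 0 < r) (κ : ℝ) :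
    (∀ (j k : Fin N) (t : ℝ), j ≠ k → polygonVortex N r κ j t ≠ polygonVortex N r κ k t) ∧
    (∀ (j : Fin N) (t : ℝ),
      deriv (polygonVortex N r κ j) t
        = 2 * Complex.I * ∑ k ∈ Finset.univ.erase j,
            (κ : ℂ) * (polygonVortex N r κ j t - polygonVortex N r κ k t)
              / ((‖polygonVortex N r κ j t - polygonVortex N r κ k t‖ : ℝ) : ℂ) ^ 2) := by
  haveI : NeZero N := ⟨by omega⟩
  set ζ : ℂ := Complex.exp (2 * (Real.pi : ℂ) * Complex.I / (N : ℂ)) with hζdef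
  have hprim : IsPrimitiveRoot ζ N := Complex.isPrimitiveRoot_exp N (by omega)
  have hζ0 : ζ ≠ 0 := hprim.ne_zero (by omega)
  have hr0 : (r : ℂ) ≠ 0 := by exact_mod_cast hr.ne'
  set A : ℂ := Complex.I * (κ : ℂ) * (((N : ℝ) - 1 : ℝ) : ℂ) / ((r : ℂ) ^ 2) with hAdef
  have hZ : ∀ (j : Fin N) (t : ℝ),
      polygonVortex N r κ j t = (r : ℂ) * Complex.exp (A * t) * ζ ^ (j : ℕ) := by
    intro j t
    unfold polygonVortex
    congr 1
    · congr 1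
      rw [hAdef]; ring_nf
    · rw [hζdef, ← Complex.exp_nat_mul]
      congr 1
      ring
  have hc : ∀ t : ℝ, (r : ℂ) * Complex.exp (A * t) ≠ 0 :=
    fun t => mul_ne_zero hr0 (Complex.exp_ne_zero _)
  -- distinctness
  have hZne : ∀ (j k : Fin N) (t : ℝ), j ≠ k →
      polygonVortex N r κ j t ≠ polygonVortex N r κ k t := by
    intro j k t hjk h
    rw [hZ, hZ] at h
    have hpow : ζ ^ (j : ℕ) = ζ ^ (k : ℕ) := mul_left_cancel₀ (hc t) h
    exact hjk (Fin.ext (hprim.pow_inj j.isLt k.isLt hpow))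
  refine ⟨hZne, ?_⟩
  intro j t
  -- derivative
  have hder : HasDerivAt (polygonVortex N r κ j) (A * polygonVortex N r κ j t) t := by
    have h1 : HasDerivAt (fun z : ℂ => Complex.exp (A * z))
        (Complex.exp (A * (t : ℂ)) * (A * 1)) (t : ℂ) :=
      ((hasDerivAt_id (t : ℂ)).const_mul A).cexp
    have h3 := ((h1.comp_ofReal).const_mul (r : ℂ)).mul_const (ζ ^ (j : ℕ))
    have heq : polygonVortex N r κ j = fun s : ℝ => (r : ℂ) * Complex.exp (A * s) * ζ ^ (j : ℕ) :=
      funext (hZ j)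
    have h4 : HasDerivAt (fun s : ℝ => (r : ℂ) * Complex.exp (A * s) * ζ ^ (j : ℕ))
        (A * ((r : ℂ) * Complex.exp (A * (t : ℂ)) * ζ ^ (j : ℕ))) t := by
      exact h3.congr_deriv (by ring)
    rw [heq]
    exact h4
  rw [hder.deriv]
  -- |Z_j| = r, i.e. Z_j * conj Z_j = r^2
  have habsZ : ‖polygonVortex N r κ j t‖ = r := by
    rw [hZ]
    have hAt : A * (t : ℂ) = Complex.I * ((κ * ((N : ℝ) - 1) * t / r ^ 2 : ℝ) : ℂ) := by
      rw [hAdef]; push_cast; ring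
    have h1 : ‖Complex.exp (A * (t : ℂ))‖ = 1 := by
      rw [hAt, Complex.norm_exp]
      simp only [Complex.mul_re, Complex.I_re, Complex.I_im, Complex.ofReal_re,
        Complex.ofReal_im]
      norm_num
    have h2 : ‖ζ ^ (j : ℕ)‖ = 1 := by
      rw [norm_pow,
        Complex.norm_eq_one_of_pow_eq_one hprim.pow_eq_one (by omega), one_pow]
    rw [norm_mul, norm_mul, h1, h2, Complex.norm_real, Real.norm_eq_abs, abs_of_pos hr, mul_one, mul_one]
  have hZconj : polygonVortex N r κ j t * (starRingEnd ℂ) (polygonVortex N r κ j t)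
      = ((r : ℂ)) ^ 2 := by
    rw [Complex.mul_conj]
    rw [← Complex.sq_norm, habsZ]
    push_cast
    ring
  have hZjne : polygonVortex N r κ j t ≠ 0 := by
    rw [hZ]
    exact mul_ne_zero (hc t) (pow_ne_zero _ hζ0)
  have hZjconjne : (starRingEnd ℂ) (polygonVortex N r κ j t) ≠ 0 := by
    simpa using hZjne
  -- sum of inverses
  have hsum : ∑ k ∈ Finset.univ.erase j,
      (polygonVortex N r κ j t - polygonVortex N r κ k t)⁻¹
      = ((N : ℂ) - 1) / (2 * polygonVortex N r κ j t) := by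
    have : ∀ k ∈ Finset.univ.erase j,
        (polygonVortex N r κ j t - polygonVortex N r κ k t)⁻¹
          = ((r : ℂ) * Complex.exp (A * t))⁻¹ * (1 / (ζ ^ (j : ℕ) - ζ ^ (k : ℕ))) := by
      intro k _
      rw [hZ, hZ, show (r : ℂ) * Complex.exp (A * t) * ζ ^ (j : ℕ)
          - (r : ℂ) * Complex.exp (A * t) * ζ ^ (k : ℕ)
          = ((r : ℂ) * Complex.exp (A * t)) * (ζ ^ (j : ℕ) - ζ ^ (k : ℕ)) by ring,
        mul_inv, one_div]
    rw [Finset.sum_congr rfl this, ← Finset.mul_sum, sum_over_erase hN hprim j, hZ]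
    have h2 : (2 : ℂ) * ((r : ℂ) * Complex.exp (A * (t : ℂ)) * ζ ^ (j : ℕ)) ≠ 0 :=
      mul_ne_zero two_ne_zero (mul_ne_zero (hc t) (pow_ne_zero _ hζ0))
    rw [eq_div_iff h2]
    field_simp
  -- per-term rewrite of the RHS
  have hterm : ∀ k ∈ Finset.univ.erase j,
      (κ : ℂ) * (polygonVortex N r κ j t - polygonVortex N r κ k t)
        / ((‖polygonVortex N r κ j t - polygonVortex N r κ k t‖ : ℝ) : ℂ) ^ 2
      = (κ : ℂ) * (starRingEnd ℂ) ((polygonVortex N r κ j t - polygonVortex N r κ k t)⁻¹) := by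
    intro k hk
    set w := polygonVortex N r κ j t - polygonVortex N r κ k t with hw
    have hwne : w ≠ 0 := sub_ne_zero.mpr (hZne j k t (Finset.ne_of_mem_erase hk).symm)
    have hwc : (starRingEnd ℂ) w ≠ 0 := by simpa using hwne
    have habs2 : (((‖w‖ : ℝ) : ℂ)) ^ 2 = w * (starRingEnd ℂ) w := by
      rw [Complex.mul_conj]
      norm_cast
      exact Complex.sq_norm w
    rw [habs2, map_inv₀]
    field_simp
  rw [Finset.sum_congr rfl hterm, ← Finset.mul_sum, ← map_sum, hsum]
  rw [map_div₀, map_sub, map_one, map_natCast, map_mul, map_ofNat]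
  rw [hAdef]
  have hcast : (((N : ℝ) - 1 : ℝ) : ℂ) = (N : ℂ) - 1 := by push_cast; ring
  rw [hcast]
  field_simp
  linear_combination ((κ:ℂ) * (N:ℂ) - κ) * hZconj

end
end

section
/- Let h ≠ 0 and let K : ℝ² → ℝ^{2×2} be the matrix field K(x₁,x₂) = (1/(h² + x₁² + x₂²))·[[h² + x₂², −x₁x₂],[−x₁x₂, h² + x₁²]]. Then the operator ∇·(K∇·) is rotationally invariant: for every θ ∈ ℝ and every C² function ψ̃ : ℝ² → ℝ, if ψ(x) := ψ̃(Q_θ x), where Q_θ is the rotation matrix [[cos θ, −sin θ],[sin θ, cos θ]], then ∇·(K∇ψ)(x) = [∇·(K∇ψ̃)](Q_θ x) for all x ∈ ℝ². -/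
open Real

noncomputable section

/-- Points of `ℝ²` as pairs. -/
abbrev R2 : Type := ℝ × ℝ

/-- Partial derivatives on `ℝ²`. -/
def pdx (f : R2 → ℝ) (p : R2) : ℝ := deriv (fun s => f (s, p.2)) p.1
def pdy (f : R2 → ℝ) (p : R2) : ℝ := deriv (fun s => f (p.1, s)) p.2

/-- The operator `∇·(K∇ψ)` with
`K(x₁,x₂) = (1/(h²+x₁²+x₂²))·[[h²+x₂², −x₁x₂],[−x₁x₂, h²+x₁²]]`. -/
def Kdiv (h : ℝ) (ψ : R2 → ℝ) (p : R2) : ℝ :=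
  pdx (fun q => ((h ^ 2 + q.2 ^ 2) * pdx ψ q - q.1 * q.2 * pdy ψ q)
        / (h ^ 2 + q.1 ^ 2 + q.2 ^ 2)) p
  + pdy (fun q => (-(q.1 * q.2) * pdx ψ q + (h ^ 2 + q.1 ^ 2) * pdy ψ q)
        / (h ^ 2 + q.1 ^ 2 + q.2 ^ 2)) p

/-- Rotation of `ℝ²` by angle `θ`. -/
def rot (θ : ℝ) (p : R2) : R2 :=
  (Real.cos θ * p.1 - Real.sin θ * p.2, Real.sin θ * p.1 + Real.cos θ * p.2)

lemma pdx_fderiv (f : R2 → ℝ) (p : R2) (hf : DifferentiableAt ℝ f p) :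
    pdx f p = fderiv ℝ f p (1, 0) := by
  have h1 : HasDerivAt (fun s : ℝ => ((s, p.2) : R2)) (1, 0) p.1 :=
    (hasDerivAt_id p.1).prodMk (hasDerivAt_const p.1 p.2)
  have h2 := hf.hasFDerivAt.comp_hasDerivAt p.1 h1
  simpa [pdx, Function.comp_def] using h2.deriv

lemma pdy_fderiv (f : R2 → ℝ) (p : R2) (hf : DifferentiableAt ℝ f p) :
    pdy f p = fderiv ℝ f p (0, 1) := by
  have h1 : HasDerivAt (fun s : ℝ => ((p.1, s) : R2)) (0, 1) p.2 :=
    (hasDerivAt_const p.2 p.1).prodMk (hasDerivAt_id p.2)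
  have h2 := hf.hasFDerivAt.comp_hasDerivAt p.2 h1
  simpa [pdy, Function.comp_def] using h2.deriv

lemma sliceX (f : R2 → ℝ) (p : R2) (hf : DifferentiableAt ℝ f p) :
    HasDerivAt (fun s => f (s, p.2)) (pdx f p) p.1 := by
  rw [pdx_fderiv f p hf]
  have h1 : HasDerivAt (fun s : ℝ => ((s, p.2) : R2)) (1, 0) p.1 :=
    (hasDerivAt_id p.1).prodMk (hasDerivAt_const p.1 p.2)
  exact hf.hasFDerivAt.comp_hasDerivAt p.1 h1

lemma sliceY (f : R2 → ℝ) (p : R2) (hf : DifferentiableAt ℝ f p) :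
    HasDerivAt (fun s => f (p.1, s)) (pdy f p) p.2 := by
  rw [pdy_fderiv f p hf]
  have h1 : HasDerivAt (fun s : ℝ => ((p.1, s) : R2)) (0, 1) p.2 :=
    (hasDerivAt_const p.2 p.1).prodMk (hasDerivAt_id p.2)
  exact hf.hasFDerivAt.comp_hasDerivAt p.2 h1

lemma rotX (θ : ℝ) (g : R2 → ℝ) (p : R2) (hg : DifferentiableAt ℝ g (rot θ p)) :
    HasDerivAt (fun s => g (rot θ (s, p.2)))
      (Real.cos θ * pdx g (rot θ p) + Real.sin θ * pdy g (rot θ p)) p.1 := by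
  have h1 : HasDerivAt (fun s : ℝ => rot θ (s, p.2)) (Real.cos θ, Real.sin θ) p.1 := by
    have hx : HasDerivAt (fun s : ℝ => Real.cos θ * s - Real.sin θ * p.2) (Real.cos θ) p.1 := by
      simpa using ((hasDerivAt_id p.1).const_mul (Real.cos θ)).sub_const (Real.sin θ * p.2)
    have hy : HasDerivAt (fun s : ℝ => Real.sin θ * s + Real.cos θ * p.2) (Real.sin θ) p.1 := by
      simpa using ((hasDerivAt_id p.1).const_mul (Real.sin θ)).add_const (Real.cos θ * p.2)
    exact hx.prodMk hy
  have h2 := hg.hasFDerivAt.comp_hasDerivAt p.1 h1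
  have h3 : fderiv ℝ g (rot θ p) (Real.cos θ, Real.sin θ)
      = Real.cos θ * pdx g (rot θ p) + Real.sin θ * pdy g (rot θ p) := by
    have e : ((Real.cos θ, Real.sin θ) : R2)
        = Real.cos θ • ((1 : ℝ), (0 : ℝ)) + Real.sin θ • ((0 : ℝ), (1 : ℝ)) := by
      simp [Prod.ext_iff]
    rw [e, map_add, map_smul, map_smul, pdx_fderiv g _ hg, pdy_fderiv g _ hg]
    simp [smul_eq_mul]
  rw [← h3]
  simpa [Function.comp_def] using h2

lemma rotY (θ : ℝ) (g : R2 → ℝ) (p : R2) (hg : DifferentiableAt ℝ g (rot θ p)) :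
    HasDerivAt (fun s => g (rot θ (p.1, s)))
      (-Real.sin θ * pdx g (rot θ p) + Real.cos θ * pdy g (rot θ p)) p.2 := by
  have h1 : HasDerivAt (fun s : ℝ => rot θ (p.1, s)) (-Real.sin θ, Real.cos θ) p.2 := by
    have hx : HasDerivAt (fun s : ℝ => Real.cos θ * p.1 - Real.sin θ * s) (-Real.sin θ) p.2 := by
      simpa using ((hasDerivAt_id p.2).const_mul (Real.sin θ)).const_sub
        (Real.cos θ * p.1)
    have hy : HasDerivAt (fun s : ℝ => Real.sin θ * p.1 + Real.cos θ * s) (Real.cos θ) p.2 := by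
      simpa using ((hasDerivAt_id p.2).const_mul (Real.cos θ)).const_add
        (Real.sin θ * p.1)
    exact hx.prodMk hy
  have h2 := hg.hasFDerivAt.comp_hasDerivAt p.2 h1
  have h3 : fderiv ℝ g (rot θ p) (-Real.sin θ, Real.cos θ)
      = -Real.sin θ * pdx g (rot θ p) + Real.cos θ * pdy g (rot θ p) := by
    have e : ((-Real.sin θ, Real.cos θ) : R2)
        = (-Real.sin θ) • ((1 : ℝ), (0 : ℝ)) + Real.cos θ • ((0 : ℝ), (1 : ℝ)) := by
      simp [Prod.ext_iff]
    rw [e, map_add, map_smul, map_smul, pdx_fderiv g _ hg, pdy_fderiv g _ hg]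
    simp [smul_eq_mul]
  rw [← h3]
  simpa [Function.comp_def] using h2


lemma pdx_contDiff (ψ : R2 → ℝ) (hψ : ContDiff ℝ 2 ψ) : ContDiff ℝ 1 (pdx ψ) := by
  have he : pdx ψ = fun q => fderiv ℝ ψ q (1, 0) :=
    funext fun q => pdx_fderiv ψ q (hψ.differentiable (by norm_num) q)
  rw [he]
  exact (hψ.fderiv_right (by norm_num)).clm_apply contDiff_const

lemma pdy_contDiff (ψ : R2 → ℝ) (hψ : ContDiff ℝ 2 ψ) : ContDiff ℝ 1 (pdy ψ) := by
  have he : pdy ψ = fun q => fderiv ℝ ψ q (0, 1) :=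
    funext fun q => pdy_fderiv ψ q (hψ.differentiable (by norm_num) q)
  rw [he]
  exact (hψ.fderiv_right (by norm_num)).clm_apply contDiff_const

/-- **Rotational invariance of `∇·(K∇·)`**: if `ψ(x) = ψ̃(Q_θ x)` then
`∇·(K∇ψ)(x) = [∇·(K∇ψ̃)](Q_θ x)` for every `x`. -/
theorem Kdiv_rotation_invariant
    (h : ℝ) (hh : h ≠ 0) (θ : ℝ) (ψt : R2 → ℝ) (hψ : ContDiff ℝ 2 ψt) :
    ∀ x : R2, Kdiv h (fun y => ψt (rot θ y)) x = Kdiv h ψt (rot θ x) := by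
  intro x
  have hd : Differentiable ℝ ψt := hψ.differentiable (by norm_num)
  have hdx : Differentiable ℝ (pdx ψt) := (pdx_contDiff ψt hψ).differentiable one_ne_zero
  have hdy : Differentiable ℝ (pdy ψt) := (pdy_contDiff ψt hψ).differentiable one_ne_zero
  have hu : ∀ q : R2, pdx (fun y => ψt (rot θ y)) q
      = Real.cos θ * pdx ψt (rot θ q) + Real.sin θ * pdy ψt (rot θ q) :=
    fun q => (rotX θ ψt q (hd (rot θ q))).deriv
  have hv : ∀ q : R2, pdy (fun y => ψt (rot θ y)) q
      = -Real.sin θ * pdx ψt (rot θ q) + Real.cos θ * pdy ψt (rot θ q) :=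
    fun q => (rotY θ ψt q (hd (rot θ q))).deriv
  simp only [Kdiv]
  simp only [hu, hv]
  -- building blocks
  have hPx := rotX θ (pdx ψt) x (hdx (rot θ x))
  have hQx := rotX θ (pdy ψt) x (hdy (rot θ x))
  have hPy := rotY θ (pdx ψt) x (hdx (rot θ x))
  have hQy := rotY θ (pdy ψt) x (hdy (rot θ x))
  have hA := sliceX (pdx ψt) (rot θ x) (hdx (rot θ x))
  have hB := sliceX (pdy ψt) (rot θ x) (hdy (rot θ x))
  have hA2 := sliceY (pdx ψt) (rot θ x) (hdx (rot θ x))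
  have hB2 := sliceY (pdy ψt) (rot θ x) (hdy (rot θ x))
  have hsmx : HasDerivAt (fun s : ℝ => s * x.2) x.2 x.1 := by
    simpa using (hasDerivAt_id x.1).mul_const x.2
  have hsmy : HasDerivAt (fun t : ℝ => x.1 * t) x.1 x.2 := by
    simpa using (hasDerivAt_id x.2).const_mul x.1
  have hsmx' : HasDerivAt (fun s : ℝ => s * (rot θ x).2) (rot θ x).2 (rot θ x).1 := by
    simpa using (hasDerivAt_id (rot θ x).1).mul_const (rot θ x).2
  have hsmy' : HasDerivAt (fun t : ℝ => (rot θ x).1 * t) (rot θ x).1 (rot θ x).2 := by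
    simpa using (hasDerivAt_id (rot θ x).2).const_mul (rot θ x).1
  have hdenx : HasDerivAt (fun s : ℝ => h ^ 2 + s ^ 2 + x.2 ^ 2) (2 * x.1) x.1 := by
    simpa using ((hasDerivAt_pow 2 x.1).const_add (h ^ 2)).add_const (x.2 ^ 2)
  have hdeny : HasDerivAt (fun t : ℝ => h ^ 2 + x.1 ^ 2 + t ^ 2) (2 * x.2) x.2 := by
    simpa using (hasDerivAt_pow 2 x.2).const_add (h ^ 2 + x.1 ^ 2)
  have hdenx' : HasDerivAt (fun s : ℝ => h ^ 2 + s ^ 2 + (rot θ x).2 ^ 2) (2 * (rot θ x).1) (rot θ x).1 := by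
    simpa using ((hasDerivAt_pow 2 (rot θ x).1).const_add (h ^ 2)).add_const ((rot θ x).2 ^ 2)
  have hdeny' : HasDerivAt (fun t : ℝ => h ^ 2 + (rot θ x).1 ^ 2 + t ^ 2) (2 * (rot θ x).2) (rot θ x).2 := by
    simpa using (hasDerivAt_pow 2 (rot θ x).2).const_add (h ^ 2 + (rot θ x).1 ^ 2)
  have hDx : (h ^ 2 + x.1 ^ 2 + x.2 ^ 2) ≠ 0 := by positivity
  have hDy : (h ^ 2 + (rot θ x).1 ^ 2 + (rot θ x).2 ^ 2) ≠ 0 := by positivity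
  -- LHS term 1
  have t1 : pdx
      (fun q =>
        ((h ^ 2 + q.2 ^ 2) * (Real.cos θ * pdx ψt (rot θ q) + Real.sin θ * pdy ψt (rot θ q)) -
            q.1 * q.2 * (-Real.sin θ * pdx ψt (rot θ q) + Real.cos θ * pdy ψt (rot θ q))) /
          (h ^ 2 + q.1 ^ 2 + q.2 ^ 2)) x = _ :=
    ((((hPx.const_mul (Real.cos θ)).add (hQx.const_mul (Real.sin θ))).const_mul (h ^ 2 + x.2 ^ 2)).sub
      (hsmx.mul ((hPx.const_mul (-Real.sin θ)).add (hQx.const_mul (Real.cos θ))))).div hdenx hDx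
      |>.deriv
  -- LHS term 2
  have t2 : pdy
      (fun q =>
        (-(q.1 * q.2) * (Real.cos θ * pdx ψt (rot θ q) + Real.sin θ * pdy ψt (rot θ q)) +
            (h ^ 2 + q.1 ^ 2) * (-Real.sin θ * pdx ψt (rot θ q) + Real.cos θ * pdy ψt (rot θ q))) /
          (h ^ 2 + q.1 ^ 2 + q.2 ^ 2)) x = _ :=
    HasDerivAt.deriv <| HasDerivAt.div
      ((hsmy.neg.mul ((hPy.const_mul (Real.cos θ)).add (hQy.const_mul (Real.sin θ)))).add
        (((hPy.const_mul (-Real.sin θ)).add (hQy.const_mul (Real.cos θ))).const_mul (h ^ 2 + x.1 ^ 2)))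
      hdeny hDx
  -- RHS term 1
  have t3 : pdx
      (fun q => ((h ^ 2 + q.2 ^ 2) * pdx ψt q - q.1 * q.2 * pdy ψt q) / (h ^ 2 + q.1 ^ 2 + q.2 ^ 2)) (rot θ x) = _ :=
    (((hA.const_mul (h ^ 2 + (rot θ x).2 ^ 2)).sub (hsmx'.mul hB)).div hdenx' hDy).deriv
  -- RHS term 2
  have t4 : pdy
      (fun q => (-(q.1 * q.2) * pdx ψt q + (h ^ 2 + q.1 ^ 2) * pdy ψt q) / (h ^ 2 + q.1 ^ 2 + q.2 ^ 2)) (rot θ x) = _ :=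
    (((hsmy'.neg.mul hA2).add (hB2.const_mul (h ^ 2 + (rot θ x).1 ^ 2))).div hdeny' hDy).deriv
  rw [t1, t2, t3, t4]
  simp only [Pi.add_apply, Pi.sub_apply, Pi.mul_apply, Pi.neg_apply, Prod.mk.eta]
  rw [show (rot θ x).1 = Real.cos θ * x.1 - Real.sin θ * x.2 from rfl]
  rw [show (rot θ x).2 = Real.sin θ * x.1 + Real.cos θ * x.2 from rfl]
  have hcs : Real.cos θ ^ 2 + Real.sin θ ^ 2 = 1 := cos_sq_add_sin_sq θ
  generalize pdx ψt (rot θ x) = P at *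
  generalize pdy ψt (rot θ x) = Q at *
  generalize pdx (pdx ψt) (rot θ x) = A at *
  generalize pdy (pdx ψt) (rot θ x) = B1 at *
  generalize pdx (pdy ψt) (rot θ x) = B2 at *
  generalize pdy (pdy ψt) (rot θ x) = C at *
  generalize hc : Real.cos θ = cc at hcs ⊢
  generalize hs : Real.sin θ = ss at hcs ⊢
  generalize x.1 = a at *
  generalize x.2 = b at *
  have hD : h ^ 2 + (cc * a - ss * b) ^ 2 + (ss * a + cc * b) ^ 2 = h ^ 2 + a ^ 2 + b ^ 2 := by
    linear_combination (a ^ 2 + b ^ 2) * hcs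
  rw [hD, ← add_div, ← add_div]
  exact congrArg (· / (h ^ 2 + a ^ 2 + b ^ 2) ^ 2) (by
    linear_combination (h ^ 2 * (h ^ 2 + a ^ 2 + b ^ 2) * (A + C)) * hcs)

end
end

section
/- For every δ > 0 there exists C > 0 such that for every a ∈ (0, δ] there exists a function h₁ : [0,∞) → ℝ, with h₁ of class C² on (0,∞), such that the function H(z) = h₁(|z|)·cos(3θ) (where z = |z|e^{iθ} ∈ ℝ² ≅ ℂ) satisfies Δ H(z) + Re(z³)/(a² + |z|²)² = 0 for all z with 0 < |z| ≤ δ, and |h₁(s)| ≤ C·s for all 0 ≤ s ≤ δ. -/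
open Real

noncomputable section

/-- Laplacian on `ℝ²`. -/
def lap2 (f : R2 → ℝ) (p : R2) : ℝ := pdx (pdx f) p + pdy (pdy f) p

/-- The point `z ∈ ℝ²` viewed as a complex number. -/
def toC (z : R2) : ℂ := (z.1 : ℂ) + (z.2 : ℂ) * Complex.I

theorem log_ge_quad {x : ℝ} (hx : 0 ≤ x) : x - x^2/2 ≤ Real.log (1+x) := by
  have key : ∀ y ∈ Set.Ici (0:ℝ), 0 ≤ Real.log (1+y) - y + y^2/2 →
      True := fun _ _ _ => trivial
  set f : ℝ → ℝ := fun y => Real.log (1+y) - y + y^2/2 with hf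
  have hderiv : ∀ y ∈ interior (Set.Ici (0:ℝ)), 0 ≤ deriv f y := by
    intro y hy
    rw [interior_Ici] at hy
    have hy' : (0:ℝ) < y := hy
    have h1 : HasDerivAt f ((1+y)⁻¹ - 1 + y) y := by
      have hl : HasDerivAt (fun y : ℝ => Real.log (1+y)) ((1+y)⁻¹) y := by
        have := (((hasDerivAt_id y).const_add 1).log (by positivity))
        simpa using this
      have := (hl.sub (hasDerivAt_id y)).add ((hasDerivAt_pow 2 y).div_const 2)
      exact this.congr_deriv (by push_cast; ring)
    rw [h1.deriv]
    have : (1+y)⁻¹ - 1 + y = y^2/(1+y) := by field_simp; ring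
    rw [this]; positivity
  have hmono : MonotoneOn f (Set.Ici 0) := by
    apply monotoneOn_of_deriv_nonneg (convex_Ici 0)
    · apply ContinuousOn.add (ContinuousOn.sub ?_ (continuousOn_id)) (by fun_prop)
      apply ContinuousOn.log (by fun_prop)
      intro y hy; simp at hy; positivity
    · intro y hy
      rw [interior_Ici] at hy
      have hy' : (0:ℝ) < y := hy
      have hl : HasDerivAt (fun y : ℝ => Real.log (1+y)) ((1+y)⁻¹) y := by
        have := (((hasDerivAt_id y).const_add 1).log (by positivity))
        simpa using this
      exact (((hl.sub (hasDerivAt_id y)).add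
        ((hasDerivAt_pow 2 y).div_const 2))).differentiableAt.differentiableWithinAt
    · exact hderiv
  have h0 : f 0 = 0 := by simp [hf]
  have := hmono (Set.self_mem_Ici) (Set.mem_Ici.2 hx) hx
  rw [h0] at this
  simp only [hf] at this
  linarith



def G (b q : ℝ) : ℝ := q⁻¹/8 - b*(q^2)⁻¹/4 + b^2*(q^3)⁻¹*Real.log ((b+q)/b)/4
def G' (b q : ℝ) : ℝ := -(q^2)⁻¹/8 + b*(q^3)⁻¹/2 - 3*b^2*(q^4)⁻¹*Real.log ((b+q)/b)/4
  + b^2*(q^3)⁻¹*(b+q)⁻¹/4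
def G'' (b q : ℝ) : ℝ := (q^3)⁻¹/4 - 3*b*(q^4)⁻¹/2 + 3*b^2*(q^5)⁻¹*Real.log ((b+q)/b)
  - 3*b^2*(q^4)⁻¹*(b+q)⁻¹/2 - b^2*(q^3)⁻¹*((b+q)^2)⁻¹/4

theorem hasDerivAt_log_aux {b q : ℝ} (hb : 0 < b) (hq : 0 < q) :
    HasDerivAt (fun q : ℝ => Real.log ((b+q)/b)) ((b+q)⁻¹) q := by
  have hbq : (0:ℝ) < b + q := by linarith
  have h : HasDerivAt (fun q : ℝ => (b+q)/b) (1/b) q :=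
    ((hasDerivAt_id q).const_add b).div_const b
  have := h.log (by positivity)
  convert this using 1
  field_simp

theorem hasDerivAt_G {b q : ℝ} (hb : 0 < b) (hq : 0 < q) : HasDerivAt (G b) (G' b q) q := by
  have hq' : q ≠ 0 := ne_of_gt hq
  have hbq : (0:ℝ) < b + q := by linarith
  have h1 : HasDerivAt (fun q : ℝ => q⁻¹/8) (-(q^2)⁻¹/8) q := (hasDerivAt_inv hq').div_const 8
  have h2 : HasDerivAt (fun q : ℝ => b*(q^2)⁻¹/4) (b*(-(2*q)/(q^2)^2)/4) q :=
    ((((hasDerivAt_pow 2 q).inv (pow_ne_zero 2 hq')).const_mul b).div_const 4).congr_deriv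
      (by ring)
  have h3 : HasDerivAt (fun q : ℝ => b^2*(q^3)⁻¹*Real.log ((b+q)/b)/4)
      ((b^2*(-(3*q^2)/(q^3)^2)*Real.log ((b+q)/b) + b^2*(q^3)⁻¹*(b+q)⁻¹)/4) q := by
    exact ((((((hasDerivAt_pow 3 q).inv (pow_ne_zero 3 hq')).const_mul (b^2))).mul
      (hasDerivAt_log_aux hb hq)).div_const 4).congr_deriv (by simp only [Pi.inv_apply]; ring)
  refine ((h1.sub h2).add h3).congr_deriv ?_
  unfold G'
  set L := Real.log ((b+q)/b) with hL
  field_simp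
  ring

theorem hasDerivAt_G' {b q : ℝ} (hb : 0 < b) (hq : 0 < q) : HasDerivAt (G' b) (G'' b q) q := by
  have hq' : q ≠ 0 := ne_of_gt hq
  have hbq : (0:ℝ) < b + q := by linarith
  have h1 : HasDerivAt (fun q : ℝ => -(q^2)⁻¹/8) (-(-(2*q)/(q^2)^2)/8) q :=
    (((hasDerivAt_pow 2 q).inv (pow_ne_zero 2 hq')).neg.div_const 8).congr_deriv (by ring)
  have h2 : HasDerivAt (fun q : ℝ => b*(q^3)⁻¹/2) (b*(-(3*q^2)/(q^3)^2)/2) q :=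
    ((((hasDerivAt_pow 3 q).inv (pow_ne_zero 3 hq')).const_mul b).div_const 2).congr_deriv
      (by ring)
  have h3 : HasDerivAt (fun q : ℝ => 3*b^2*(q^4)⁻¹*Real.log ((b+q)/b)/4)
      ((3*b^2*(-(4*q^3)/(q^4)^2)*Real.log ((b+q)/b) + 3*b^2*(q^4)⁻¹*(b+q)⁻¹)/4) q := by
    exact ((((((hasDerivAt_pow 4 q).inv (pow_ne_zero 4 hq')).const_mul (3*b^2))).mul
      (hasDerivAt_log_aux hb hq)).div_const 4).congr_deriv (by simp only [Pi.inv_apply]; ring)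
  have h4 : HasDerivAt (fun q : ℝ => b^2*(q^3)⁻¹*(b+q)⁻¹/4)
      ((b^2*(-(3*q^2)/(q^3)^2)*(b+q)⁻¹ + b^2*(q^3)⁻¹*(-1/(b+q)^2))/4) q := by
    have hbq' : HasDerivAt (fun q : ℝ => (b+q)⁻¹) (-1/(b+q)^2) q := by
      exact (((hasDerivAt_id q).const_add b).inv (ne_of_gt hbq)).congr_deriv (by simp only [id_eq]; try ring)
    exact (((((hasDerivAt_pow 3 q).inv (pow_ne_zero 3 hq')).const_mul (b^2)).mul
      hbq').div_const 4).congr_deriv (by simp only [Pi.inv_apply]; ring)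
  refine (((h1.add h2).sub h3).add h4).congr_deriv ?_
  unfold G''
  set L := Real.log ((b+q)/b) with hL
  field_simp
  ring

theorem G_ode {b q : ℝ} (hb : 0 < b) (hq : 0 < q) :
    4*q*G'' b q + 16*G' b q = -((b+q)^2)⁻¹ := by
  have hq' : q ≠ 0 := ne_of_gt hq
  have hbq : (b+q) ≠ 0 := by positivity
  unfold G' G''
  set L := Real.log ((b+q)/b) with hL
  field_simp
  ring

theorem G_bounds {b q : ℝ} (hb : 0 < b) (hq : 0 < q) : 0 ≤ G b q ∧ G b q ≤ q⁻¹/8 := by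
  have hq' : q ≠ 0 := ne_of_gt hq
  have hb' : b ≠ 0 := ne_of_gt hb
  set L := Real.log ((b+q)/b) with hLdef
  have harg : (b+q)/b = 1 + q/b := by field_simp
  have hL1 : L ≤ q/b := by
    rw [hLdef, harg]
    have := Real.log_le_sub_one_of_pos (show (0:ℝ) < 1 + q/b by positivity)
    linarith
  have hL2 : q/b - (q/b)^2/2 ≤ L := by
    rw [hLdef, harg]
    exact log_ge_quad (by positivity)
  have hG : G b q = (q^2/2 - b*q + b^2*L)/(4*q^3) := by
    rw [eq_div_iff (by positivity)]
    unfold G; field_simp; ring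
  constructor
  · rw [hG]
    apply div_nonneg _ (by positivity)
    have h2 : b^2*(q/b - (q/b)^2/2) ≤ b^2*L := by nlinarith [sq_nonneg b]
    have h3 : b^2*(q/b - (q/b)^2/2) = b*q - q^2/2 := by field_simp
    nlinarith
  · have hG2 : q⁻¹/8 - G b q = (b*q - b^2*L)/(4*q^3) := by
      rw [eq_div_iff (by positivity)]
      unfold G; field_simp; ring
    have h2 : b^2*L ≤ b^2*(q/b) := by nlinarith [sq_nonneg b]
    have h3 : b^2*(q/b) = b*q := by field_simp
    have : 0 ≤ q⁻¹/8 - G b q := by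
      rw [hG2]; apply div_nonneg _ (by positivity); nlinarith
    linarith
def FF (b : ℝ) : R2 → ℝ := fun p => G b (p.1^2+p.2^2) * (p.1^3 - 3*p.1*p.2^2)
def P1 (b : ℝ) : R2 → ℝ := fun p =>
  2*p.1*G' b (p.1^2+p.2^2)*(p.1^3-3*p.1*p.2^2) + G b (p.1^2+p.2^2)*(3*p.1^2-3*p.2^2)
def Q1 (b : ℝ) : R2 → ℝ := fun p =>
  2*p.2*G' b (p.1^2+p.2^2)*(p.1^3-3*p.1*p.2^2) - 6*p.1*p.2*G b (p.1^2+p.2^2)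

theorem slice_x {b : ℝ} (hb : 0 < b) (p : R2) (hp : 0 < p.1^2+p.2^2) :
    HasDerivAt (fun s => FF b (s, p.2)) (P1 b p) p.1 := by
  have hq : HasDerivAt (fun s : ℝ => s^2+p.2^2) (2*p.1) p.1 := by
    simpa using (hasDerivAt_pow 2 p.1).add_const (p.2^2)
  have hg : HasDerivAt (fun s : ℝ => G b (s^2+p.2^2)) (G' b (p.1^2+p.2^2) * (2*p.1)) p.1 :=
    by have := (hasDerivAt_G hb hp).comp p.1 hq; exact this
  have hw : HasDerivAt (fun s : ℝ => s^3-3*s*p.2^2) (3*p.1^2-3*p.2^2) p.1 := by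
    have h := (hasDerivAt_pow 3 p.1).sub
      (((hasDerivAt_id p.1).const_mul (3:ℝ)).mul_const (p.2^2))
    exact h.congr_deriv (by push_cast; ring)
  exact (hg.mul hw).congr_deriv (by unfold P1; ring)

theorem slice_y {b : ℝ} (hb : 0 < b) (p : R2) (hp : 0 < p.1^2+p.2^2) :
    HasDerivAt (fun t => FF b (p.1, t)) (Q1 b p) p.2 := by
  have hq : HasDerivAt (fun t : ℝ => p.1^2+t^2) (2*p.2) p.2 := by
    simpa using ((hasDerivAt_pow 2 p.2).const_add (p.1^2))
  have hg : HasDerivAt (fun t : ℝ => G b (p.1^2+t^2)) (G' b (p.1^2+p.2^2) * (2*p.2)) p.2 :=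
    by have := (hasDerivAt_G hb hp).comp p.2 hq; exact this
  have hw : HasDerivAt (fun t : ℝ => p.1^3-3*p.1*t^2) (-(6*p.1*p.2)) p.2 := by
    have h := ((hasDerivAt_pow 2 p.2).const_mul (3*p.1)).const_sub (p.1^3)
    exact h.congr_deriv (by push_cast; ring)
  exact (hg.mul hw).congr_deriv (by unfold Q1; ring)

theorem slice_xx {b : ℝ} (hb : 0 < b) (p : R2) (hp : 0 < p.1^2+p.2^2) :
    HasDerivAt (fun s => P1 b (s, p.2))
      (2*G' b (p.1^2+p.2^2)*(p.1^3-3*p.1*p.2^2)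
        + 4*p.1^2*G'' b (p.1^2+p.2^2)*(p.1^3-3*p.1*p.2^2)
        + 4*p.1*G' b (p.1^2+p.2^2)*(3*p.1^2-3*p.2^2)
        + 6*p.1*G b (p.1^2+p.2^2)) p.1 := by
  have hq : HasDerivAt (fun s : ℝ => s^2+p.2^2) (2*p.1) p.1 := by
    simpa using (hasDerivAt_pow 2 p.1).add_const (p.2^2)
  have hg : HasDerivAt (fun s : ℝ => G b (s^2+p.2^2)) (G b (p.1^2+p.2^2) * 0 + G' b (p.1^2+p.2^2) * (2*p.1)) p.1 := by
    have := (hasDerivAt_G hb hp).comp p.1 hq; exact this.congr_deriv (by ring)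
  have hg' : HasDerivAt (fun s : ℝ => G' b (s^2+p.2^2)) (G'' b (p.1^2+p.2^2) * (2*p.1)) p.1 :=
    by have := (hasDerivAt_G' hb hp).comp p.1 hq; exact this
  have hw : HasDerivAt (fun s : ℝ => s^3-3*s*p.2^2) (3*p.1^2-3*p.2^2) p.1 := by
    have h := (hasDerivAt_pow 3 p.1).sub
      (((hasDerivAt_id p.1).const_mul (3:ℝ)).mul_const (p.2^2))
    exact h.congr_deriv (by push_cast; ring)
  have h2s : HasDerivAt (fun s : ℝ => 2*s) 2 p.1 := by
    simpa using (hasDerivAt_id p.1).const_mul (2:ℝ)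
  have hw2 : HasDerivAt (fun s : ℝ => 3*s^2-3*p.2^2) (3*(2*p.1)) p.1 := by
    have h := ((hasDerivAt_pow 2 p.1).const_mul (3:ℝ)).sub_const (3*p.2^2)
    exact h.congr_deriv (by push_cast; ring)
  have hg2 : HasDerivAt (fun s : ℝ => G b (s^2+p.2^2)) (G' b (p.1^2+p.2^2) * (2*p.1)) p.1 :=
    by have := (hasDerivAt_G hb hp).comp p.1 hq; exact this
  have hT1 := ((h2s.mul hg').mul hw)
  have hT2 := hg2.mul hw2
  exact (hT1.add hT2).congr_deriv (by simp only [Pi.mul_apply]; ring)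

theorem slice_yy {b : ℝ} (hb : 0 < b) (p : R2) (hp : 0 < p.1^2+p.2^2) :
    HasDerivAt (fun t => Q1 b (p.1, t))
      (2*G' b (p.1^2+p.2^2)*(p.1^3-3*p.1*p.2^2)
        + 4*p.2^2*G'' b (p.1^2+p.2^2)*(p.1^3-3*p.1*p.2^2)
        - 24*p.1*p.2^2*G' b (p.1^2+p.2^2)
        - 6*p.1*G b (p.1^2+p.2^2)) p.2 := by
  have hq : HasDerivAt (fun t : ℝ => p.1^2+t^2) (2*p.2) p.2 := by
    simpa using ((hasDerivAt_pow 2 p.2).const_add (p.1^2))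
  have hg : HasDerivAt (fun t : ℝ => G b (p.1^2+t^2)) (G' b (p.1^2+p.2^2) * (2*p.2)) p.2 :=
    by have := (hasDerivAt_G hb hp).comp p.2 hq; exact this
  have hg' : HasDerivAt (fun t : ℝ => G' b (p.1^2+t^2)) (G'' b (p.1^2+p.2^2) * (2*p.2)) p.2 :=
    by have := (hasDerivAt_G' hb hp).comp p.2 hq; exact this
  have hw : HasDerivAt (fun t : ℝ => p.1^3-3*p.1*t^2) (-(6*p.1*p.2)) p.2 := by
    have h := ((hasDerivAt_pow 2 p.2).const_mul (3*p.1)).const_sub (p.1^3)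
    exact h.congr_deriv (by push_cast; ring)
  have h2t : HasDerivAt (fun t : ℝ => 2*t) 2 p.2 := by
    simpa using (hasDerivAt_id p.2).const_mul (2:ℝ)
  have hlin : HasDerivAt (fun t : ℝ => 6*p.1*t) (6*p.1) p.2 := by
    simpa using (hasDerivAt_id p.2).const_mul (6*p.1)
  have hT1 := ((h2t.mul hg').mul hw)
  have hT2 := hlin.mul hg
  exact (hT1.sub hT2).congr_deriv (by simp only [Pi.mul_apply]; ring)
theorem pdx_FF {b : ℝ} (hb : 0 < b) (p : R2) (hp : 0 < p.1^2+p.2^2) :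
    pdx (FF b) p = P1 b p := (slice_x hb p hp).deriv

theorem pdy_FF {b : ℝ} (hb : 0 < b) (p : R2) (hp : 0 < p.1^2+p.2^2) :
    pdy (FF b) p = Q1 b p := (slice_y hb p hp).deriv

theorem lap2_FF {b : ℝ} (hb : 0 < b) (p : R2) (hp : 0 < p.1^2+p.2^2) :
    lap2 (FF b) p = -((p.1^3-3*p.1*p.2^2) * ((b+(p.1^2+p.2^2))^2)⁻¹) := by
  have hox : pdx (pdx (FF b)) p
      = 2*G' b (p.1^2+p.2^2)*(p.1^3-3*p.1*p.2^2)
        + 4*p.1^2*G'' b (p.1^2+p.2^2)*(p.1^3-3*p.1*p.2^2)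
        + 4*p.1*G' b (p.1^2+p.2^2)*(3*p.1^2-3*p.2^2)
        + 6*p.1*G b (p.1^2+p.2^2) := by
    have hopen : IsOpen {s : ℝ | 0 < s^2 + p.2^2} :=
      isOpen_lt continuous_const (by fun_prop)
    have hev : (fun s => pdx (FF b) (s, p.2)) =ᶠ[nhds p.1] (fun s => P1 b (s, p.2)) := by
      filter_upwards [hopen.mem_nhds hp] with s hs
      exact pdx_FF hb (s, p.2) hs
    show deriv (fun s => pdx (FF b) (s, p.2)) p.1 = _
    rw [hev.deriv_eq]
    exact (slice_xx hb p hp).deriv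
  have hoy : pdy (pdy (FF b)) p
      = 2*G' b (p.1^2+p.2^2)*(p.1^3-3*p.1*p.2^2)
        + 4*p.2^2*G'' b (p.1^2+p.2^2)*(p.1^3-3*p.1*p.2^2)
        - 24*p.1*p.2^2*G' b (p.1^2+p.2^2)
        - 6*p.1*G b (p.1^2+p.2^2) := by
    have hopen : IsOpen {t : ℝ | 0 < p.1^2 + t^2} :=
      isOpen_lt continuous_const (by fun_prop)
    have hev : (fun t => pdy (FF b) (p.1, t)) =ᶠ[nhds p.2] (fun t => Q1 b (p.1, t)) := by
      filter_upwards [hopen.mem_nhds hp] with t ht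
      exact pdy_FF hb (p.1, t) ht
    show deriv (fun t => pdy (FF b) (p.1, t)) p.2 = _
    rw [hev.deriv_eq]
    exact (slice_yy hb p hp).deriv
  have hode := G_ode hb (q := p.1^2+p.2^2) hp
  unfold lap2
  rw [hox, hoy]
  linear_combination (p.1^3 - 3*p.1*p.2^2) * hode
theorem cube_re_eq (z : ℂ) : (z^3).re = ‖z‖ ^ 3 * Real.cos (3 * Complex.arg z) := by
  conv_lhs => rw [← Complex.norm_mul_exp_arg_mul_I z]
  rw [mul_pow, ← Complex.ofReal_pow, ← Complex.exp_nat_mul]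
  have h : ((3:ℕ):ℂ) * ((Complex.arg z : ℂ) * Complex.I)
      = ((3 * Complex.arg z : ℝ) : ℂ) * Complex.I := by push_cast; ring
  rw [h, Complex.re_ofReal_mul, Complex.exp_ofReal_mul_I_re]

theorem sq_abs_toC (w : R2) : ‖toC w‖ ^ 2 = w.1^2 + w.2^2 := by
  rw [Complex.sq_norm, Complex.normSq_apply]
  simp [toC]
  ring

theorem cube_re_toC (w : R2) : ((toC w)^3).re = w.1^3 - 3*w.1*w.2^2 := by
  simp [toC, pow_succ, Complex.add_re, Complex.add_im, Complex.mul_re, Complex.mul_im]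
  ring

theorem fun_eq {b : ℝ} :
    (fun w : R2 => (‖toC w‖)^3 * G b ((‖toC w‖)^2)
        * Real.cos (3 * Complex.arg (toC w))) = FF b := by
  funext w
  have h1 : ‖toC w‖ ^ 3 * Real.cos (3 * Complex.arg (toC w)) = ((toC w)^3).re :=
    (cube_re_eq (toC w)).symm
  rw [sq_abs_toC]
  calc ‖toC w‖^3 * G b (w.1^2+w.2^2) * Real.cos (3 * Complex.arg (toC w))
      = G b (w.1^2+w.2^2) * (‖toC w‖^3 * Real.cos (3 * Complex.arg (toC w))) := by
        ring
    _ = G b (w.1^2+w.2^2) * ((toC w)^3).re := by rw [h1]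
    _ = FF b w := by rw [cube_re_toC]; rfl

theorem h1_contDiff {b : ℝ} (hb : 0 < b) :
    ContDiffOn ℝ 2 (fun s : ℝ => s^3 * G b (s^2)) (Set.Ioi (0:ℝ)) := by
  intro s hs
  have hs' : (0:ℝ) < s := hs
  apply ContDiffAt.contDiffWithinAt
  have hsq : ContDiffAt ℝ 2 (fun s : ℝ => s^2) s := contDiffAt_id.pow 2
  have hG : ContDiffAt ℝ 2 (G b) (s^2) := by
    unfold G
    have hq : (s^2 : ℝ) ≠ 0 := by positivity
    have h1 : ContDiffAt ℝ 2 (fun q : ℝ => q⁻¹/8) (s^2) :=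
      (contDiffAt_id.inv hq).div_const 8
    have h2 : ContDiffAt ℝ 2 (fun q : ℝ => b*(q^2)⁻¹/4) (s^2) :=
      (contDiffAt_const.mul ((contDiffAt_id.pow 2).inv (by positivity))).div_const 4
    have h3 : ContDiffAt ℝ 2 (fun q : ℝ => b^2*(q^3)⁻¹*Real.log ((b+q)/b)/4) (s^2) := by
      have hlog : ContDiffAt ℝ 2 (fun q : ℝ => Real.log ((b+q)/b)) (s^2) := by
        apply ContDiffAt.log
        · exact (contDiffAt_const.add contDiffAt_id).div_const b
        · positivity
      exact ((contDiffAt_const.mul ((contDiffAt_id.pow 3).inv (by positivity))).mul hlog).div_const 4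
    exact (h1.sub h2).add h3
  exact (contDiffAt_id.pow 3).mul (ContDiffAt.comp (f := fun s : ℝ => s^2) s hG hsq)

/-- **The mode-3 correction `H₁`** (cf. Proposition 2.2): for every `δ > 0` there is `C > 0`
so that for every regularization scale `a ∈ (0, δ]` there exists `h₁`, of class `C²` on
`(0,∞)`, such that `H(z) = h₁(|z|) cos 3θ` solves `ΔH + Re(z³)/(a²+|z|²)² = 0` on
`0 < |z| ≤ δ` and `|h₁(s)| ≤ C s` on `[0, δ]`. -/
theorem mode_three_correction_exists (δ : ℝ) (hδ : 0 < δ) :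
    ∃ C : ℝ, 0 < C ∧
      ∀ a : ℝ, a ∈ Set.Ioc (0 : ℝ) δ →
        ∃ h₁ : ℝ → ℝ, ContDiffOn ℝ 2 h₁ (Set.Ioi (0 : ℝ)) ∧
          (∀ z : R2, 0 < ‖toC z‖ → ‖toC z‖ ≤ δ →
            lap2 (fun w => h₁ (‖toC w‖) * Real.cos (3 * Complex.arg (toC w))) z
              + ((toC z) ^ 3).re / (a ^ 2 + (‖toC z‖) ^ 2) ^ 2 = 0) ∧
          (∀ s : ℝ, 0 ≤ s → s ≤ δ → |h₁ s| ≤ C * s) := by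
  refine ⟨1/8, by norm_num, ?_⟩
  intro a ha
  have hb : (0:ℝ) < a^2 := pow_pos ha.1 2
  set b := a^2 with hbdef
  refine ⟨fun s => s^3 * G b (s^2), h1_contDiff hb, ?_, ?_⟩
  · intro z h0 hδz
    have hq : 0 < z.1^2 + z.2^2 := by
      rw [← sq_abs_toC]; exact pow_pos h0 2
    have hfe : (fun w : R2 => (fun s : ℝ => s^3 * G b (s^2)) (‖toC w‖) *
        Real.cos (3 * Complex.arg (toC w))) = FF b := fun_eq
    rw [hfe, lap2_FF hb z hq, cube_re_toC, sq_abs_toC]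
    rw [div_eq_mul_inv]
    ring
  · intro s hs0 hsδ
    rcases eq_or_lt_of_le hs0 with h | h
    · simp [← h]
    · obtain ⟨hg0, hg1⟩ := G_bounds hb (show (0:ℝ) < s^2 by positivity)
      have hnn : 0 ≤ s^3 * G b (s^2) := mul_nonneg (by positivity) hg0
      rw [abs_of_nonneg hnn]
      have h2 : s^3 * G b (s^2) ≤ s^3 * ((s^2)⁻¹/8) :=
        mul_le_mul_of_nonneg_left hg1 (by positivity)
      have h3 : s^3 * ((s^2)⁻¹/8) = 1/8 * s := by
        field_simp
      linarith

end
end
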